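/- For every integer d ≥ 1, the d-dimensional hypercube graph Q_d has congestion at most 1/2: it admits a routing whose flow through every ordered pair of adjacent vertices is at most 2^{d−1} = (1/2)·|{0,1}^d|. -/

import Mathlib

open Set Pointwise

noncomputable section

open scoped Classical in
/-- The number of times a walk traverses the vertex `u` immediately followed by `v`. -/
noncomputable def dartCount {V : Type*} {G : SimpleGraph V} {s t : V}
    (p : G.Walk s t) (u v : V) : ℕ :=
  (p.darts.filter (fun dr => dr.toProd = (u, v))).length

/-- A routing of a graph `G`: for each ordered pair `(s,t)` of distinct vertices, a
finitely supported weight function with nonnegative values summing to `1` on the walks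
from `s` to `t`. -/
def IsRouting {V : Type*} (G : SimpleGraph V)
    (w : ∀ s t : V, G.Walk s t → ℝ) : Prop :=
  ∀ s t : V, s ≠ t →
    (∀ p, 0 ≤ w s t p) ∧ {p | w s t p ≠ 0}.Finite ∧ ∑ᶠ p, w s t p = 1

/-- The flow of a routing through an ordered pair `(u,v)`: the sum over all ordered pairs
`(s,t)` of distinct vertices and all walks `p` from `s` to `t` of the weight of `p` times
the number of times `p` traverses `u` immediately followed by `v`. -/
noncomputable def routingFlow {V : Type*} (G : SimpleGraph V)
    (w : ∀ s t : V, G.Walk s t → ℝ) (u v : V) : ℝ :=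
  ∑ᶠ s, ∑ᶠ t, ∑ᶠ _ : s ≠ t, ∑ᶠ p : G.Walk s t, w s t p * (dartCount p u v : ℝ)

/-- The `d`-dimensional hypercube graph on vertex set `{0,1}^d`: two vertices are adjacent
exactly when they differ in exactly one coordinate. -/
def cubeGraph (d : ℕ) : SimpleGraph (Fin d → Bool) where
  Adj x y := {i | x i ≠ y i}.ncard = 1
  symm := by
    constructor
    intro x y h
    have hxy : {i | y i ≠ x i} = {i | x i ≠ y i} := by ext i; simp [ne_comm]
    simpa [hxy] using h
  loopless := by constructor; intro x h; simp at h

namespace CubeAux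

variable {d : ℕ}

/-- Flip coordinate `i`. -/
def flip (i : Fin d) (s : Fin d → Bool) : Fin d → Bool :=
  fun j => if j = i then !(s j) else s j

lemma flip_self (i : Fin d) (s : Fin d → Bool) : flip i s i = !(s i) := by simp [flip]

lemma flip_ne {i j : Fin d} (h : j ≠ i) (s : Fin d → Bool) : flip i s j = s j := by
  simp [flip, h]

lemma adj_flip (i : Fin d) (s : Fin d → Bool) : (cubeGraph d).Adj s (flip i s) := by
  have hset : {j | s j ≠ flip i s j} = {i} := by
    ext j
    by_cases h : j = i
    · subst h; simp [flip]
    · simp [flip, h]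
  show {j | s j ≠ flip i s j}.ncard = 1
  rw [hset, Set.ncard_singleton]

lemma flip_eq_flip {i j : Fin d} {u : Fin d → Bool} (h : flip j u = flip i u) : j = i := by
  by_contra hne
  have h1 := congrFun h j
  rw [flip_self, flip_ne (Ne.symm ?_ : j ≠ i)] at h1
  · simp at h1
  · exact fun h' => hne h'.symm

/-- Flip a list of coordinates in order. -/
def flips : List (Fin d) → (Fin d → Bool) → (Fin d → Bool)
  | [], s => s
  | i :: L, s => flips L (flip i s)

/-- The walk obtained by flipping a list of coordinates in order. -/
def flipWalk : (L : List (Fin d)) → (s : Fin d → Bool) → (cubeGraph d).Walk s (flips L s)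
  | [], _ => .nil
  | i :: L, s => .cons (adj_flip i s) (flipWalk L (flip i s))

lemma flips_apply (L : List (Fin d)) (hL : L.Nodup) (s : Fin d → Bool) (j : Fin d) :
    flips L s j = if j ∈ L then !(s j) else s j := by
  induction L generalizing s with
  | nil => simp [flips]
  | cons a L ih =>
    rw [List.nodup_cons] at hL
    show flips L (flip a s) j = _
    rw [ih hL.2]
    by_cases hja : j = a
    · subst hja
      simp [hL.1, flip_self]
    · rw [flip_ne hja]
      simp [List.mem_cons, hja]

/-- The (sorted) list of coordinates where `s` and `t` differ. -/
def diffList (s t : Fin d → Bool) : List (Fin d) :=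
  (List.finRange d).filter (fun i => s i ≠ t i)

lemma mem_diffList {s t : Fin d → Bool} {j : Fin d} : j ∈ diffList s t ↔ s j ≠ t j := by
  simp [diffList]

lemma nodup_diffList (s t : Fin d → Bool) : (diffList s t).Nodup :=
  (List.nodup_finRange d).filter _

lemma sorted_diffList (s t : Fin d → Bool) : (diffList s t).Pairwise (· < ·) :=
  (List.pairwise_lt_finRange d).filter _

lemma flips_diffList (s t : Fin d → Bool) : flips (diffList s t) s = t := by
  funext j
  rw [flips_apply _ (nodup_diffList s t)]
  by_cases h : s j = t j
  · simp [mem_diffList, h]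
  · have : j ∈ diffList s t := mem_diffList.mpr h
    rw [if_pos this]
    cases hs : s j <;> cases ht : t j <;> simp_all

/-- The bit-fixing walk from `s` to `t`. -/
def bitWalk (s t : Fin d → Bool) : (cubeGraph d).Walk s t :=
  (flipWalk (diffList s t) s).copy rfl (flips_diffList s t)

open scoped Classical in
lemma dartCount_cons {a b c : Fin d → Bool} (h : (cubeGraph d).Adj a b)
    (p : (cubeGraph d).Walk b c) (u v : Fin d → Bool) :
    dartCount (SimpleGraph.Walk.cons h p) u v
      = (if (a, b) = (u, v) then 1 else 0) + dartCount p u v := by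
  simp only [dartCount, SimpleGraph.Walk.darts_cons, List.filter_cons]
  by_cases hab : (a, b) = (u, v)
  · simp [hab]; omega
  · simp [hab]

lemma dartCount_bitWalk (s t u v : Fin d → Bool) :
    dartCount (bitWalk s t) u v = dartCount (flipWalk (diffList s t) s) u v := by
  simp [dartCount, bitWalk, SimpleGraph.Walk.darts_copy]

lemma dartCount_flipWalk_le_count (u v : Fin d → Bool) (i : Fin d) (hv : v = flip i u) :
    ∀ (L : List (Fin d)) (s : Fin d → Bool),
      dartCount (flipWalk L s) u v ≤ L.count i
  | [], s => by simp [flipWalk, dartCount]; intro a ha; cases ha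
  | j :: L, s => by
    rw [show dartCount (flipWalk (j :: L) s) u v = dartCount (SimpleGraph.Walk.cons (adj_flip j s) (flipWalk L (flip j s))) u v from rfl,
      dartCount_cons, List.count_cons]
    by_cases hd : (s, flip j s) = (u, v)
    · have hs : s = u := congrArg Prod.fst hd
      have hji : j = i := by
        apply flip_eq_flip (u := u)
        rw [← hs] at hv ⊢
        exact (congrArg Prod.snd hd).trans hv
      rw [if_pos hd, if_pos (by simp [hji])]
      have := dartCount_flipWalk_le_count u v i hv L (flip j s)
      omega
    · rw [if_neg hd]
      have := dartCount_flipWalk_le_count u v i hv L (flip j s)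
      omega

lemma dartCount_flipWalk_pos (u v : Fin d → Bool) (i : Fin d) (hv : v = flip i u) :
    ∀ (L : List (Fin d)) (s : Fin d → Bool),
      dartCount (flipWalk L s) u v ≠ 0 →
      ∃ L1 L2, L = L1 ++ i :: L2 ∧ flips L1 s = u
  | [], s => by simp [flipWalk, dartCount]; intro a ha; cases ha
  | j :: L, s => by
    intro hne
    rw [show dartCount (flipWalk (j :: L) s) u v = dartCount (SimpleGraph.Walk.cons (adj_flip j s) (flipWalk L (flip j s))) u v from rfl,
      dartCount_cons] at hne
    by_cases hd : (s, flip j s) = (u, v)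
    · have hs : s = u := congrArg Prod.fst hd
      have hji : j = i := by
        apply flip_eq_flip (u := u)
        rw [← hs] at hv ⊢
        exact (congrArg Prod.snd hd).trans hv
      exact ⟨[], L, by rw [hji]; rfl, hs⟩
    · rw [if_neg hd, zero_add] at hne
      obtain ⟨L1, L2, hL, hfl⟩ := dartCount_flipWalk_pos u v i hv L (flip j s) hne
      exact ⟨j :: L1, L2, by rw [hL]; rfl, hfl⟩

/-- The key pointwise bound. -/
lemma key (u v : Fin d → Bool) (i : Fin d) (hv : v = flip i u) (s t : Fin d → Bool) :
    dartCount (bitWalk s t) u v ≤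
      if ((∀ j, i ≤ j → s j = u j) ∧ (∀ j, j < i → t j = u j) ∧ t i = v i)
        then 1 else 0 := by
  classical
  by_cases hz : dartCount (bitWalk s t) u v = 0
  · rw [hz]; positivity
  · rw [dartCount_bitWalk] at hz ⊢
    obtain ⟨L1, L2, hL, hfl⟩ := dartCount_flipWalk_pos u v i hv _ s hz
    have hnodup := nodup_diffList s t
    have hsorted := sorted_diffList s t
    rw [hL] at hnodup hsorted
    have hL1lt : ∀ a ∈ L1, a < i := by
      intro a ha
      exact (List.pairwise_append.mp hsorted).2.2 a ha i List.mem_cons_self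
    have hL2gt : ∀ a ∈ L2, i < a := by
      intro a ha
      exact (List.pairwise_cons.mp (List.pairwise_append.mp hsorted).2.1).1 a ha
    have hL1nodup : L1.Nodup := (List.nodup_append.mp hnodup).1
    have hu : ∀ j, u j = if j ∈ L1 then !(s j) else s j := by
      intro j
      rw [← hfl, flips_apply L1 hL1nodup]
    have hmemL : ∀ j, j ∈ diffList s t ↔ s j ≠ t j := fun j => mem_diffList
    have hiL : i ∈ diffList s t := by rw [hL]; simp
    have hsti : s i ≠ t i := (hmemL i).mp hiL
    have good : (∀ j, i ≤ j → s j = u j) ∧ (∀ j, j < i → t j = u j) ∧ t i = v i := by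
      refine ⟨?_, ?_, ?_⟩
      · intro j hij
        rw [hu j, if_neg (fun hmem => absurd (hL1lt j hmem) (not_lt.mpr hij))]
      · intro j hji
        rw [hu j]
        by_cases hmem : j ∈ L1
        · rw [if_pos hmem]
          have : j ∈ diffList s t := by rw [hL]; exact List.mem_append_left _ hmem
          have hst := (hmemL j).mp this
          cases hsj : s j <;> cases htj : t j <;> simp_all
        · rw [if_neg hmem]
          have : j ∉ diffList s t := by
            rw [hL]
            intro hmem'
            rcases List.mem_append.mp hmem' with h1 | h1
            · exact hmem h1
            · rcases List.mem_cons.mp h1 with h2 | h2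
              · exact absurd h2 (by intro h; subst h; exact lt_irrefl _ hji)
              · exact absurd (hL2gt j h2) (not_lt.mpr hji.le)
          have := not_not.mp (fun hne => this ((hmemL j).mpr hne))
          exact this.symm
      · have hui : u i = s i := by
          rw [hu i, if_neg (fun hmem => lt_irrefl i (hL1lt i hmem))]
        rw [hv, flip_self, hui]
        cases hsi : s i <;> cases hti : t i <;> simp_all
    rw [if_pos good]
    calc dartCount (flipWalk (diffList s t) s) u v
        ≤ (diffList s t).count i := dartCount_flipWalk_le_count u v i hv _ s
      _ ≤ 1 := List.nodup_iff_count_le_one.mp (nodup_diffList s t) i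

end CubeAux

open CubeAux in
theorem cubeGraph_congestion (d : ℕ) (hd : 1 ≤ d) :
    ∃ w : ∀ s t : Fin d → Bool, (cubeGraph d).Walk s t → ℝ,
      IsRouting (cubeGraph d) w ∧
      ∀ u v : Fin d → Bool, (cubeGraph d).Adj u v →
        routingFlow (cubeGraph d) w u v ≤
          (1/2 : ℝ) * Fintype.card (Fin d → Bool) := by
  classical
  refine ⟨fun s t p => if p = bitWalk s t then 1 else 0, ?_, ?_⟩
  · intro s t hst
    refine ⟨fun p => by positivity, ?_, ?_⟩
    · apply Set.Finite.subset (Set.finite_singleton (bitWalk s t))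
      intro p hp
      simp only [Set.mem_setOf_eq] at hp
      rw [Set.mem_singleton_iff]
      by_contra h
      simp [h] at hp
    · rw [finsum_eq_single _ (bitWalk s t) (fun p hp => by simp [hp])]
      simp
  · intro u v huv
    -- find the flipped coordinate
    obtain ⟨i, hi⟩ : ∃ i, {j | u j ≠ v j} = {i} := Set.ncard_eq_one.mp huv
    have hv : v = flip i u := by
      funext j
      by_cases hji : j = i
      · subst hji
        have hmem : j ∈ {k | u k ≠ v k} := by rw [hi]; exact Set.mem_singleton j
        have : u j ≠ v j := hmem
        rw [flip_self]
        cases huj : u j <;> cases hvj : v j <;> simp_all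
      · have : u j = v j := by
          by_contra hne
          have hmem : j ∈ {k | u k ≠ v k} := hne
          rw [hi] at hmem
          exact hji (Set.mem_singleton_iff.mp hmem)
        rw [flip_ne hji, this]
    -- rewrite flow as a finite double sum
    have hinner : ∀ s t : Fin d → Bool,
        (∑ᶠ p : (cubeGraph d).Walk s t,
          (if p = bitWalk s t then (1:ℝ) else 0) * (dartCount p u v : ℝ))
          = (dartCount (bitWalk s t) u v : ℝ) := by
      intro s t
      rw [finsum_eq_single _ (bitWalk s t) (fun p hp => by simp [hp])]
      simp
    have hflow : routingFlow (cubeGraph d) (fun s t p => if p = bitWalk s t then 1 else 0) u v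
        = ∑ s : Fin d → Bool, ∑ t : Fin d → Bool,
            (if s ≠ t then (dartCount (bitWalk s t) u v : ℝ) else 0) := by
      rw [routingFlow, finsum_eq_sum_of_fintype]
      refine Finset.sum_congr rfl (fun s _ => ?_)
      rw [finsum_eq_sum_of_fintype]
      refine Finset.sum_congr rfl (fun t _ => ?_)
      rw [hinner s t, finsum_eq_if]
    rw [hflow]
    set good : (Fin d → Bool) × (Fin d → Bool) → Prop := fun p =>
      (∀ j, i ≤ j → p.1 j = u j) ∧ (∀ j, j < i → p.2 j = u j) ∧ p.2 i = v i with hgood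
    have step1 : ∑ s : Fin d → Bool, ∑ t : Fin d → Bool,
        (if s ≠ t then (dartCount (bitWalk s t) u v : ℝ) else 0)
        ≤ ∑ s : Fin d → Bool, ∑ t : Fin d → Bool, (if good (s, t) then (1:ℝ) else 0) := by
      refine Finset.sum_le_sum (fun s _ => Finset.sum_le_sum (fun t _ => ?_))
      by_cases hst : s ≠ t
      · rw [if_pos hst]
        have := key u v i hv s t
        by_cases hg : good (s, t)
        · rw [if_pos hg]
          rw [hgood] at hg
          rw [if_pos hg] at this
          exact_mod_cast this
        · rw [if_neg hg]
          rw [hgood] at hg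
          rw [if_neg hg] at this
          exact_mod_cast this
      · rw [if_neg hst]
        positivity
    refine le_trans step1 ?_
    -- count the good pairs
    have hsum : ∑ s : Fin d → Bool, ∑ t : Fin d → Bool, (if good (s, t) then (1:ℝ) else 0)
        = ((Finset.univ : Finset ((Fin d → Bool) × (Fin d → Bool))).filter good).card := by
      rw [← Finset.sum_product', Finset.sum_boole]
      rfl
    rw [hsum]
    have hcard : ((Finset.univ : Finset ((Fin d → Bool) × (Fin d → Bool))).filter good).card
        ≤ 2 ^ (d - 1) := by
      have hinj : Set.InjOn (fun p : (Fin d → Bool) × (Fin d → Bool) =>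
          (fun j : {j : Fin d // j ≠ i} => if (j : Fin d) < i then p.1 j else p.2 j))
          ((Finset.univ : Finset ((Fin d → Bool) × (Fin d → Bool))).filter good) := by
        intro p hp q hq heq
        simp only [Finset.coe_filter, Set.mem_setOf_eq] at hp hq
        have hp' := hp.2; have hq' := hq.2
        have heqj : ∀ j : Fin d, (hj : j ≠ i) →
            (if j < i then p.1 j else p.2 j) = (if j < i then q.1 j else q.2 j) := by
          intro j hj
          exact congrFun heq ⟨j, hj⟩
        have h1 : p.1 = q.1 := by
          funext j
          by_cases hji : j < i
          · have hj : j ≠ i := ne_of_lt hji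
            have := heqj j hj
            rwa [if_pos hji, if_pos hji] at this
          · rw [hp'.1 j (not_lt.mp hji), hq'.1 j (not_lt.mp hji)]
        have h2 : p.2 = q.2 := by
          funext j
          rcases lt_trichotomy j i with hji | hji | hji
          · rw [hp'.2.1 j hji, hq'.2.1 j hji]
          · subst hji; rw [hp'.2.2, hq'.2.2]
          · have hj : j ≠ i := ne_of_gt hji
            have := heqj j hj
            rwa [if_neg (not_lt.mpr hji.le), if_neg (not_lt.mpr hji.le)] at this
        exact Prod.ext h1 h2
      calc ((Finset.univ : Finset ((Fin d → Bool) × (Fin d → Bool))).filter good).card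
          ≤ (Finset.univ : Finset ({j : Fin d // j ≠ i} → Bool)).card :=
            Finset.card_le_card_of_injOn _ (fun _ _ => Finset.mem_univ _) hinj
        _ = 2 ^ (d - 1) := by
            rw [Finset.card_univ, Fintype.card_fun, Fintype.card_bool]
            congr 1
            rw [Fintype.card_subtype_compl, Fintype.card_subtype_eq, Fintype.card_fin]
    calc (((Finset.univ : Finset ((Fin d → Bool) × (Fin d → Bool))).filter good).card : ℝ)
        ≤ (2 ^ (d - 1) : ℕ) := by exact_mod_cast hcard
      _ = (1/2 : ℝ) * Fintype.card (Fin d → Bool) := by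
          rw [Fintype.card_fun, Fintype.card_bool, Fintype.card_fin]
          push_cast
          have h2 : (2:ℝ) ^ d = 2 ^ (d - 1) * 2 := by
            rw [← pow_succ]
            congr 1
            omega
          rw [h2]
          ring
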